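/- Let L > 0, a > 0 and u₀ > 0, and let u : ℝ → ℝ be three times continuously differentiable on [0,L] with u(0) = u(L) = 0 and u′(L) = 0. Then ∫₀^L u′(x)² dx ≤ 4 ∫₀^L (u″′(x) + u′(x) + a·sat(u(x)))² dx + (4a² + 8L²/5) ∫₀^L u(x)² dx. In particular, the H¹₀-norm of u is bounded by a constant (depending only on L and a) times the graph norm ‖u‖²_{L²} + ‖u″′ + u′ + a·sat(u)‖²_{L²}, which yields compactness of the embedding of the operator domain into L²(0,L). -/

import Mathlib

/-- The saturation function with level `u₀`. -/
noncomputable def sat (u₀ s : ℝ) : ℝ :=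
  if s < -u₀ then -u₀ else if s ≤ u₀ then s else u₀

lemma sat_eq_max_min (u₀ s : ℝ) (h : 0 ≤ u₀) :
    sat u₀ s = max (-u₀) (min s u₀) := by
  unfold sat
  rcases lt_or_ge s (-u₀) with h1 | h1
  · rw [if_pos h1, min_eq_left (by linarith), max_eq_left (by linarith)]
  · rw [if_neg (not_lt.2 h1)]
    rcases le_or_gt s u₀ with h2 | h2
    · rw [if_pos h2, min_eq_left h2, max_eq_right (by linarith)]
    · rw [if_neg (not_le.2 h2), min_eq_right (by linarith), max_eq_right (by linarith)]

lemma mul_sat_nonneg (u₀ s : ℝ) (h : 0 ≤ u₀) : 0 ≤ s * sat u₀ s := by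
  unfold sat
  split_ifs with h1 h2 <;> nlinarith

/-- FTC helper on `[0,L]`. -/
lemma ftc_aux {L : ℝ} (hL : 0 ≤ L) {F F' : ℝ → ℝ}
    (h : ∀ x ∈ Set.Icc (0:ℝ) L, HasDerivWithinAt F (F' x) (Set.Icc 0 L) x)
    (hcont : ContinuousOn F' (Set.Icc 0 L)) :
    ∫ x in (0:ℝ)..L, F' x = F L - F 0 := by
  apply intervalIntegral.integral_eq_sub_of_hasDeriv_right_of_le hL
  · exact fun x hx => (h x hx).continuousWithinAt
  · intro x hx
    have hx' : Set.Icc (0:ℝ) L ∈ nhds x := Icc_mem_nhds hx.1 hx.2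
    exact ((h x ⟨hx.1.le, hx.2.le⟩).hasDerivAt hx').hasDerivWithinAt
  · exact (hcont.mono (by rw [Set.uIcc_of_le hL])).intervalIntegrable

set_option maxHeartbeats 1000000 in
theorem kdv_sat_graph_norm_H1_bound (L a u₀ : ℝ)
    (hL : 0 < L) (ha : 0 < a) (hu₀ : 0 < u₀) (u u₁ u₂ u₃ : ℝ → ℝ)
    (hu₁ : ∀ x ∈ Set.Icc (0:ℝ) L, HasDerivWithinAt u (u₁ x) (Set.Icc 0 L) x)
    (hu₂ : ∀ x ∈ Set.Icc (0:ℝ) L, HasDerivWithinAt u₁ (u₂ x) (Set.Icc 0 L) x)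
    (hu₃ : ∀ x ∈ Set.Icc (0:ℝ) L, HasDerivWithinAt u₂ (u₃ x) (Set.Icc 0 L) x)
    (hu₃cont : ContinuousOn u₃ (Set.Icc 0 L))
    (hbc0 : u 0 = 0) (hbcL : u L = 0) (hbc1 : u₁ L = 0) :
    ∫ x in (0:ℝ)..L, (u₁ x)^2
      ≤ 4 * (∫ x in (0:ℝ)..L, (u₃ x + u₁ x + a * sat u₀ (u x))^2)
        + (4 * a^2 + 8 * L^2 / 5) * ∫ x in (0:ℝ)..L, (u x)^2 := by
  set f : ℝ → ℝ := fun x => u₃ x + u₁ x + a * sat u₀ (u x) with hf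
  -- continuity facts
  have huc : ContinuousOn u (Set.Icc 0 L) := fun x hx => (hu₁ x hx).continuousWithinAt
  have hu1c : ContinuousOn u₁ (Set.Icc 0 L) := fun x hx => (hu₂ x hx).continuousWithinAt
  have hu2c : ContinuousOn u₂ (Set.Icc 0 L) := fun x hx => (hu₃ x hx).continuousWithinAt
  have hsatc : Continuous (sat u₀) := by
    have : sat u₀ = fun s => max (-u₀) (min s u₀) :=
      funext fun s => sat_eq_max_min u₀ s hu₀.le
    rw [this]
    exact continuous_const.max (continuous_id.min continuous_const)
  have hsuc : ContinuousOn (fun x => sat u₀ (u x)) (Set.Icc 0 L) :=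
    hsatc.comp_continuousOn huc
  have hfc : ContinuousOn f (Set.Icc 0 L) :=
    (hu₃cont.add hu1c).add (continuousOn_const.mul hsuc)
  have hxc : ContinuousOn (fun x : ℝ => x) (Set.Icc 0 L) := continuousOn_id
  have hInt : ∀ g : ℝ → ℝ, ContinuousOn g (Set.Icc 0 L) →
      IntervalIntegrable g MeasureTheory.volume 0 L := fun g hg =>
    (hg.mono (by rw [Set.uIcc_of_le hL.le])).intervalIntegrable
  set A := ∫ x in (0:ℝ)..L, (u₁ x)^2 with hA
  set B := ∫ x in (0:ℝ)..L, (u x)^2 with hB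
  set F := ∫ x in (0:ℝ)..L, (f x)^2 with hF
  set E := ∫ x in (0:ℝ)..L, x * u x * f x with hE
  set S := ∫ x in (0:ℝ)..L, x * u x * sat u₀ (u x) with hS
  have hAnn : 0 ≤ A := intervalIntegral.integral_nonneg hL.le fun x _ => sq_nonneg _
  have hBnn : 0 ≤ B := intervalIntegral.integral_nonneg hL.le fun x _ => sq_nonneg _
  have hFnn : 0 ≤ F := intervalIntegral.integral_nonneg hL.le fun x _ => sq_nonneg _
  have hSnn : 0 ≤ S := by
    apply intervalIntegral.integral_nonneg hL.le
    intro x hx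
    have := mul_sat_nonneg u₀ (u x) hu₀.le
    have := hx.1
    nlinarith
  -- integrability of various integrands
  have int_u1sq : IntervalIntegrable (fun x => (u₁ x)^2) MeasureTheory.volume 0 L :=
    hInt _ (hu1c.pow 2)
  have int_usq : IntervalIntegrable (fun x => (u x)^2) MeasureTheory.volume 0 L :=
    hInt _ (huc.pow 2)
  have int_fsq : IntervalIntegrable (fun x => (f x)^2) MeasureTheory.volume 0 L :=
    hInt _ (hfc.pow 2)
  have int_xu3 : IntervalIntegrable (fun x => x * u x * u₃ x) MeasureTheory.volume 0 L :=
    hInt _ ((hxc.mul huc).mul hu₃cont)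
  have int_xu1 : IntervalIntegrable (fun x => x * u x * u₁ x) MeasureTheory.volume 0 L :=
    hInt _ ((hxc.mul huc).mul hu1c)
  have int_xsat : IntervalIntegrable (fun x => x * u x * sat u₀ (u x)) MeasureTheory.volume 0 L :=
    hInt _ ((hxc.mul huc).mul hsuc)
  -- Identity 1 : ∫ x u u₃ = 3/2 A
  have key1 : ∫ x in (0:ℝ)..L, (x * u x * u₃ x - 3/2 * (u₁ x)^2) = 0 := by
    have hftc := ftc_aux hL.le
      (F := fun x => x * u x * u₂ x - u x * u₁ x - x * (u₁ x)^2 / 2)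
      (F' := fun x => x * u x * u₃ x - 3/2 * (u₁ x)^2)
      (by
        intro x hx
        have h1 := ((hasDerivWithinAt_id x (Set.Icc (0:ℝ) L)).mul (hu₁ x hx)).mul (hu₃ x hx)
        have h2 := (hu₁ x hx).mul (hu₂ x hx)
        have h3 := ((hasDerivWithinAt_id x (Set.Icc (0:ℝ) L)).mul ((hu₂ x hx).pow 2)).div_const 2
        have h4 := (h1.sub h2).sub h3
        convert h4 using 1
        case e'_9 =>
          simp only [Pi.mul_apply, Pi.pow_apply, id_eq]
          push_cast
          ring
        all_goals rfl)
      (((hxc.mul huc).mul hu₃cont).sub (continuousOn_const.mul (hu1c.pow 2)))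
    rw [hftc]
    norm_num [hbcL, hbc1, hbc0]
  have hI3 : ∫ x in (0:ℝ)..L, x * u x * u₃ x = 3/2 * A := by
    have h := intervalIntegral.integral_sub int_xu3
      (hInt (fun x => 3/2 * (u₁ x)^2) (continuousOn_const.mul (hu1c.pow 2)))
    rw [h, intervalIntegral.integral_const_mul] at key1
    rw [hA]; linarith
  -- Identity 2 : ∫ x u u₁ = - B/2
  have key2 : ∫ x in (0:ℝ)..L, (x * u x * u₁ x + (u x)^2 / 2) = 0 := by
    have hftc := ftc_aux hL.le
      (F := fun x => x * (u x)^2 / 2)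
      (F' := fun x => x * u x * u₁ x + (u x)^2 / 2)
      (by
        intro x hx
        have h1 := ((hasDerivWithinAt_id x (Set.Icc (0:ℝ) L)).mul ((hu₁ x hx).pow 2)).div_const 2
        convert h1 using 1
        case e'_9 =>
          simp only [Pi.mul_apply, Pi.pow_apply, id_eq]
          push_cast
          ring
        all_goals rfl)
      ((hxc.mul huc).mul hu1c |>.add ((huc.pow 2).div_const 2))
    rw [hftc]
    norm_num [hbcL, hbc0]
  have hI1 : ∫ x in (0:ℝ)..L, x * u x * u₁ x = -(B/2) := by
    have h := intervalIntegral.integral_add int_xu1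
      (hInt (fun x => (u x)^2 / 2) ((huc.pow 2).div_const 2))
    rw [h, intervalIntegral.integral_div] at key2
    rw [hB]; linarith
  -- split E
  have hEsplit : E = 3/2 * A + -(B/2) + a * S := by
    rw [hE]
    have hfun : (fun x => x * u x * f x)
        = fun x => x * u x * u₃ x + x * u x * u₁ x + a * (x * u x * sat u₀ (u x)) := by
      funext x
      simp only [hf]
      ring
    rw [hfun, intervalIntegral.integral_add (int_xu3.add int_xu1) (int_xsat.const_mul a),
      intervalIntegral.integral_add int_xu3 int_xu1, intervalIntegral.integral_const_mul,
      hI3, hI1]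
  have hmain : 3/2 * A ≤ E + 1/2 * B := by
    nlinarith [mul_nonneg ha.le hSnn]
  -- Cauchy–Schwarz bound on E
  have keyE : ∀ ε : ℝ, 0 < ε → E ≤ ε * F + L^2/(4*ε) * B := by
    intro ε hε
    have hmono : E ≤ ∫ x in (0:ℝ)..L, (ε * (f x)^2 + L^2/(4*ε) * (u x)^2) := by
      apply intervalIntegral.integral_mono_on hL.le (hInt _ ((hxc.mul huc).mul hfc))
        (hInt _ ((continuousOn_const.mul (hfc.pow 2)).add
          (continuousOn_const.mul (huc.pow 2))))
      intro x hx
      have hx2 : x^2 ≤ L^2 := by nlinarith [hx.1, hx.2]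
      have h1 : 4*ε*(x * u x * f x) ≤ 4*ε*(ε * (f x)^2 + L^2/(4*ε) * (u x)^2) := by
        have h2 : 4*ε*(ε * (f x)^2 + L^2/(4*ε) * (u x)^2)
            = 4*ε^2*(f x)^2 + L^2*(u x)^2 := by
          field_simp
        rw [h2]
        nlinarith [sq_nonneg (2*ε*(f x) - x*(u x)),
          mul_nonneg (sub_nonneg.2 hx2) (sq_nonneg (u x))]
      exact le_of_mul_le_mul_left h1 (by positivity)
    calc E ≤ ∫ x in (0:ℝ)..L, (ε * (f x)^2 + L^2/(4*ε) * (u x)^2) := hmono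
    _ = ε * F + L^2/(4*ε) * B := by
        rw [intervalIntegral.integral_add (int_fsq.const_mul ε) (int_usq.const_mul _),
          intervalIntegral.integral_const_mul, intervalIntegral.integral_const_mul]
  -- Poincaré-type bound : B ≤ 4 L² A
  have hPoin : B ≤ 4 * L^2 * A := by
    have hmono : ∫ x in (0:ℝ)..L, -(x * u x * u₁ x)
        ≤ ∫ x in (0:ℝ)..L, (1/4 * (u x)^2 + L^2 * (u₁ x)^2) := by
      apply intervalIntegral.integral_mono_on hL.le int_xu1.neg
        (hInt _ ((continuousOn_const.mul (huc.pow 2)).add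
          (continuousOn_const.mul (hu1c.pow 2))))
      intro x hx
      simp only [Pi.neg_apply, Pi.add_apply, Pi.mul_apply, Pi.pow_apply]
      have hx2 : x^2 ≤ L^2 := by nlinarith [hx.1, hx.2]
      nlinarith [sq_nonneg (u x + 2*x*(u₁ x)),
        mul_nonneg (sub_nonneg.2 hx2) (sq_nonneg (u₁ x))]
    rw [intervalIntegral.integral_neg, hI1,
      intervalIntegral.integral_add (int_usq.const_mul _) (int_u1sq.const_mul _),
      intervalIntegral.integral_const_mul, intervalIntegral.integral_const_mul] at hmono
    rw [hA, hB] at *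
    linarith
  -- conclusion by case split on L²
  rcases le_or_gt (L^2) (1/4) with hsmall | hlarge
  · have hE4 := keyE 4 (by norm_num)
    nlinarith [mul_nonneg (sub_nonneg.2 hsmall) hAnn, mul_nonneg (sq_nonneg a) hBnn,
      mul_nonneg (sq_nonneg L) hBnn]
  · have hE6 := keyE 6 (by norm_num)
    nlinarith [mul_nonneg (sub_nonneg.2 hlarge.le) hBnn, mul_nonneg (sq_nonneg a) hBnn]
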